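/- Let Λ be a Hopf R-order in K[G] with dual order A, assume ε_A(I(A)) = λR is principal with generator λ ∈ R, and let M be a finitely generated left Λ-module that is locally free over Λ (M_𝔭 is a free Λ_𝔭-module for every prime 𝔭 of R). Then: (a) if h : M × M → Λ is a hermitian G-form — biadditive, with h(ν·m, μ·n) = ν·h(m,n)·μ̄ for all ν, μ ∈ Λ and h(m,n) = h(n,m)‾ — then q_h(m,n) := λ·ℓ(h(m,n)) takes values in R and is a G-form on M, i.e. R-bilinear, symmetric and with q_h(g·m, g·n) = q_h(m,n) for all g ∈ G; (b) if q : M × M → R is a G-form on M, then h_q(m,n) := λ⁻¹ Σ_{g∈G} q(m, g·n)·g takes values in Λ and is a hermitian G-form on M; (c) the assignments h ↦ q_h and q ↦ h_q are mutually inverse bijections between hermitian G-forms and G-forms on M; (d) h is non-degenerate (the map n ↦ (m ↦ h(m,n)) is a bijection of M onto Hom_Λ(M,Λ)) if and only if q_h is non-degenerate (the map n ↦ (m ↦ q_h(m,n)) is a bijection of M onto Hom_R(M,R)). -/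

import Mathlib

noncomputable section

open scoped BigOperators

section Core

variable (R : Type) [CommRing R] (K : Type) [Field K] [Algebra R K]
variable (G : Type) [Group G] [Fintype G] [DecidableEq G]

/-- The embedding of `K[G]` into the left factor of `K[G × G] ≅ K[G] ⊗_K K[G]`. -/
def incl1 (a : MonoidAlgebra K G) : MonoidAlgebra K (G × G) :=
  MonoidAlgebra.mapDomain (fun g => (g, (1 : G))) a

/-- The embedding of `K[G]` into the right factor of `K[G × G] ≅ K[G] ⊗_K K[G]`. -/
def incl2 (a : MonoidAlgebra K G) : MonoidAlgebra K (G × G) :=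
  MonoidAlgebra.mapDomain (fun g => ((1 : G), g)) a

/-- The comultiplication `Δ(g) = g ⊗ g` of `K[G]`, realized in `K[G × G] ≅ K[G] ⊗_K K[G]`. -/
def diagMap (u : MonoidAlgebra K G) : MonoidAlgebra K (G × G) :=
  MonoidAlgebra.mapDomain (fun g : G => (g, g)) u

/-- The antipode `S(g) = g⁻¹` of `K[G]`. -/
def antipodeMap (u : MonoidAlgebra K G) : MonoidAlgebra K G :=
  MonoidAlgebra.mapDomain (fun g : G => g⁻¹) u

/-- A Hopf `R`-order `Λ` in `K[G]`: an `R`-subalgebra containing `R[G]`, finitely generated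
as an `R`-module, spanning `K[G]` over `K`, with `Δ(Λ)` contained in the image of
`Λ ⊗_R Λ → K[G] ⊗_K K[G] ≅ K[G × G]`, `ε(Λ) ⊆ R` and `S(Λ) = Λ`. -/
structure IsHopfOrder (Λ : Subalgebra R (MonoidAlgebra K G)) : Prop where
  grp_mem : ∀ g : G, MonoidAlgebra.of K G g ∈ Λ
  fg : Λ.toSubmodule.FG
  spans : Submodule.span K (Λ : Set (MonoidAlgebra K G)) = ⊤
  comul_mem : ∀ u ∈ Λ, diagMap K G u ∈ Submodule.span R
    {x : MonoidAlgebra K (G × G) | ∃ a ∈ Λ, ∃ b ∈ Λ, x = incl1 K G a * incl2 K G b}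
  counit_mem : ∀ u ∈ Λ, (∑ g : G, u.coeff g) ∈ Set.range (algebraMap R K)
  antipode_mem : ∀ u ∈ Λ, antipodeMap K G u ∈ Λ

/-- The dual order `A` of `Λ`, inside `Map(G, K)`:
`A = {f : G → K | ∑ u_g f(g) ∈ R for all ∑ u_g g ∈ Λ}`. -/
def dualOrder (Λ : Subalgebra R (MonoidAlgebra K G)) : Set (G → K) :=
  {f | ∀ u ∈ Λ, (∑ g : G, u.coeff g * f g) ∈ Set.range (algebraMap R K)}

/-- The action of `K[G]` on `Map(G, K)`: `(u·f)(h) = ∑_g u_g f(h g)`. -/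
def actOn (u : MonoidAlgebra K G) (f : G → K) : G → K :=
  fun h => ∑ g : G, u.coeff g * f (h * g)

/-- The integrals `I(A)` of the dual order `A`:
`I(A) = {x ∈ A | a·x = a(1)·x for all a ∈ A}` (pointwise product). -/
def integrals (Λ : Subalgebra R (MonoidAlgebra K G)) : Set (G → K) :=
  {x | x ∈ dualOrder R K G Λ ∧
    ∀ a ∈ dualOrder R K G Λ, ∀ h : G, a h * x h = a 1 * x h}

/-- `ε_A(I(A)) = {x(1) : x ∈ I(A)}`. -/
def epsIntegrals (Λ : Subalgebra R (MonoidAlgebra K G)) : Set K :=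
  {y | ∃ x ∈ integrals R K G Λ, y = x 1}

end Core

section Forms

variable (R : Type) [CommRing R] (K : Type) [Field K] [Algebra R K]
variable (G : Type) [Group G] [Fintype G] [DecidableEq G]
variable (Λ : Subalgebra R (MonoidAlgebra K G))

/-- The element of `Λ` corresponding to a group element `g ∈ G ⊆ R[G] ⊆ Λ`. -/
def gAct (hΛ : IsHopfOrder R K G Λ) (g : G) : Λ :=
  ⟨MonoidAlgebra.of K G g, hΛ.grp_mem g⟩

variable (M : Type) [AddCommGroup M] [Module R M] [Module Λ M] [IsScalarTower R Λ M]

/-- `M` is free over `Λ` after localizing at the prime `𝔭` of `R` (this includes the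
generic prime `(0)`). -/
def LocallyFreeAt (𝔭 : Ideal R) : Prop :=
  ∃ (n : ℕ) (b : Fin n → M),
    (∀ m : M, ∃ s : R, s ∉ 𝔭 ∧ ∃ c : Fin n → Λ, s • m = ∑ i, c i • b i) ∧
    (∀ c : Fin n → Λ, (∑ i, c i • b i) = (0 : M) →
      ∃ s : R, s ∉ 𝔭 ∧ ∀ i, s • c i = 0)

/-- A (`K`-valued, `R`-integral) `G`-form on `M`: `R`-bilinear, symmetric, `G`-invariant and
with values in `R ⊆ K`. -/
structure IsGForm (hΛ : IsHopfOrder R K G Λ) (q : M → M → K) : Prop where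
  add_left : ∀ m₁ m₂ n, q (m₁ + m₂) n = q m₁ n + q m₂ n
  add_right : ∀ m n₁ n₂, q m (n₁ + n₂) = q m n₁ + q m n₂
  smul_left : ∀ (r : R) (m n : M), q (r • m) n = algebraMap R K r * q m n
  smul_right : ∀ (r : R) (m n : M), q m (r • n) = algebraMap R K r * q m n
  symm : ∀ m n, q m n = q n m
  g_invariant : ∀ (g : G) (m n : M),
    q (gAct R K G Λ hΛ g • m) (gAct R K G Λ hΛ g • n) = q m n
  vals : ∀ m n, q m n ∈ Set.range (algebraMap R K)

/-- A hermitian `G`-form on `M` with values in `Λ ⊆ K[G]`: biadditive, with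
`h(ν·m, μ·n) = ν·h(m,n)·S(μ)` and `h(m,n) = S(h(n,m))`. -/
structure IsHermitianGForm (hΛ : IsHopfOrder R K G Λ) (h : M → M → MonoidAlgebra K G) :
    Prop where
  add_left : ∀ m₁ m₂ n, h (m₁ + m₂) n = h m₁ n + h m₂ n
  add_right : ∀ m n₁ n₂, h m (n₁ + n₂) = h m n₁ + h m n₂
  smul_pair : ∀ (ν μ : Λ) (m n : M),
    h (ν • m) (μ • n) =
      (ν : MonoidAlgebra K G) * h m n * antipodeMap K G (μ : MonoidAlgebra K G)
  conj_symm : ∀ m n, h m n = antipodeMap K G (h n m)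
  vals : ∀ m n, h m n ∈ Λ

/-- `q_h(m,n) = λ·ℓ(h(m,n))`, where `ℓ` takes the coefficient at `1 ∈ G`. -/
def qOf (lam : R) (h : M → M → MonoidAlgebra K G) : M → M → K :=
  fun m n => algebraMap R K lam * (h m n).coeff 1

/-- `h_q(m,n) = λ⁻¹ ∑_g q(m, g·n)·g`. -/
def hOf (hΛ : IsHopfOrder R K G Λ) (lam : R) (q : M → M → K) :
    M → M → MonoidAlgebra K G :=
  fun m n => ∑ g : G,
    MonoidAlgebra.single g ((algebraMap R K lam)⁻¹ * q m (gAct R K G Λ hΛ g • n))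

/-- Non-degeneracy of a `G`-form: `n ↦ q(·,n)` is a bijection of `M` onto `Hom_R(M,R)`. -/
def QNondeg (q : M → M → K) : Prop :=
  ∀ φ : M →ₗ[R] R, ∃! n : M, ∀ m : M, q m n = algebraMap R K (φ m)

/-- Non-degeneracy of a hermitian `G`-form: `n ↦ h(·,n)` is a bijection of `M` onto
`Hom_Λ(M,Λ)`. -/
def HNondeg (h : M → M → MonoidAlgebra K G) : Prop :=
  ∀ φ : M → MonoidAlgebra K G,
    (∀ m₁ m₂, φ (m₁ + m₂) = φ m₁ + φ m₂) →
    (∀ (ν : Λ) (m : M), φ (ν • m) = (ν : MonoidAlgebra K G) * φ m) →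
    (∀ m, φ m ∈ Λ) →
    ∃! n : M, ∀ m : M, h m n = φ m

end Forms


namespace S3P
set_option linter.unusedSectionVars false
set_option linter.unnecessarySimpa false
set_option maxHeartbeats 1000000
set_option synthInstance.maxHeartbeats 200000

section RngClosure
variable {R : Type} [CommRing R] {K : Type} [Field K] [Algebra R K]

local notation "aR" => algebraMap R K
local notation "Rg" => Set.range (algebraMap R K)

lemma rg_add {x y : K} (hx : x ∈ Rg) (hy : y ∈ Rg) : x + y ∈ Rg := by
  obtain ⟨a, rfl⟩ := hx; obtain ⟨b, rfl⟩ := hy; exact ⟨a + b, map_add _ _ _⟩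

lemma rg_mul {x y : K} (hx : x ∈ Rg) (hy : y ∈ Rg) : x * y ∈ Rg := by
  obtain ⟨a, rfl⟩ := hx; obtain ⟨b, rfl⟩ := hy; exact ⟨a * b, map_mul _ _ _⟩

lemma rg_sub {x y : K} (hx : x ∈ Rg) (hy : y ∈ Rg) : x - y ∈ Rg := by
  obtain ⟨a, rfl⟩ := hx; obtain ⟨b, rfl⟩ := hy; exact ⟨a - b, map_sub _ _ _⟩

lemma rg_zero : (0 : K) ∈ Rg := ⟨0, map_zero _⟩

lemma rg_sum {ι : Type*} (s : Finset ι) (f : ι → K) (h : ∀ i ∈ s, f i ∈ Rg) :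
    (∑ i ∈ s, f i) ∈ Rg := by
  classical
  induction s using Finset.induction_on with
  | empty => simpa using rg_zero
  | insert _ _ hni ih =>
    rw [Finset.sum_insert hni]
    exact rg_add (h _ (Finset.mem_insert_self _ _))
      (ih fun i hi => h i (Finset.mem_insert_of_mem hi))

end RngClosure

section DualBasis

variable {K : Type} [Field K] {ι : Type} [Fintype ι] [DecidableEq ι]

/-- finite pairing on `ι → K` -/
def pairPi (u v : ι → K) : K := ∑ i, u i * v i

variable {R : Type} [CommRing R] [IsDomain R] [IsDedekindDomain R]
variable [Algebra R K] [IsFractionRing R K]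

local notation "aR" => algebraMap R K
local notation "Rg" => Set.range (algebraMap R K)


lemma pairPi_add_right (u v w : ι → K) : pairPi u (v + w) = pairPi u v + pairPi u w := by
  simp [pairPi, mul_add, Finset.sum_add_distrib]

lemma pairPi_sub_right (u v w : ι → K) : pairPi u (v - w) = pairPi u v - pairPi u w := by
  simp [pairPi, mul_sub, Finset.sum_sub_distrib]

lemma pairPi_smul_right (c : K) (u w : ι → K) : pairPi u (c • w) = c * pairPi u w := by
  simp [pairPi, Finset.mul_sum]; apply Finset.sum_congr rfl; intros; ring

lemma pairPi_add_left (u v w : ι → K) : pairPi (u + v) w = pairPi u w + pairPi v w := by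
  simp [pairPi, add_mul, Finset.sum_add_distrib]

lemma pairPi_sub_left (u v w : ι → K) : pairPi (u - v) w = pairPi u w - pairPi v w := by
  simp [pairPi, sub_mul, Finset.sum_sub_distrib]

lemma pairPi_smul_left (c : K) (u w : ι → K) : pairPi (c • u) w = c * pairPi u w := by
  simp [pairPi, Finset.mul_sum, mul_assoc]

lemma pairPi_sum_left {κ : Type*} (s : Finset κ) (f : κ → (ι → K)) (w : ι → K) :
    pairPi (∑ j ∈ s, f j) w = ∑ j ∈ s, pairPi (f j) w := by
  classical
  induction s using Finset.induction_on with
  | empty => simp [pairPi]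
  | insert _ _ hni ih => rw [Finset.sum_insert hni, Finset.sum_insert hni, pairPi_add_left, ih]

lemma pairPi_delta (u : ι → K) (i₀ : ι) (c : K) :
    pairPi u (fun i => if i = i₀ then c else 0) = u i₀ * c := by
  simp [pairPi, mul_ite]


open FractionalIdeal in
theorem dual_basis_aux (S : Finset ι) :
    ∀ L : Submodule R (ι → K), L.FG → (∀ u ∈ L, ∀ i, i ∉ S → u i = 0) →
    ∃ (n : ℕ) (x χ : Fin n → (ι → K)),
      (∀ j, x j ∈ L) ∧ (∀ j, ∀ u ∈ L, pairPi u (χ j) ∈ Rg) ∧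
      (∀ u ∈ L, u = ∑ j, pairPi u (χ j) • x j) := by
  classical
  induction S using Finset.induction_on with
  | empty =>
    intro L _ hsupp
    refine ⟨0, ![], ![], by simp, by simp, ?_⟩
    intro u hu
    have hu0 : u = 0 := funext fun i => hsupp u hu i (by simp)
    simp [hu0]
  | @insert i₀ S' hi₀ IH =>
    intro L hfg hsupp
    set ev : (ι → K) →ₗ[R] K := (LinearMap.proj i₀ : (ι → K) →ₗ[K] K).restrictScalars R with hev
    set I : Submodule R K := L.map ev with hI
    by_cases hIbot : I = ⊥
    · -- all elements vanish at i₀ as well; use IH directly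
      refine IH L hfg ?_
      intro u hu i hiS
      by_cases hii : i = i₀
      · subst hii
        have : ev u ∈ I := Submodule.mem_map_of_mem hu
        rw [hIbot] at this
        simpa [hev] using this
      · exact hsupp u hu i (by simp [hii, hiS])
    · -- the fractional ideal I is invertible
      have hIfg : I.FG := hfg.map ev
      have hfrac : IsFractional (nonZeroDivisors R) I := isFractional_of_fg hIfg
      set J : FractionalIdeal (nonZeroDivisors R) K := ⟨I, hfrac⟩ with hJ
      have hJne : J ≠ 0 := by
        intro h0
        apply hIbot
        have : (J : Submodule R K) = (0 : FractionalIdeal (nonZeroDivisors R) K) := by rw [h0]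
        have h' : (J : Submodule R K) = ⊥ := by simpa using this
        exact h'
      have hmul : J * J⁻¹ = 1 := mul_inv_cancel₀ hJne
      have hone : (1 : K) ∈ (I * (J⁻¹ : FractionalIdeal (nonZeroDivisors R) K) :
          Submodule R K) := by
        have : (1 : K) ∈ ((J * J⁻¹ : FractionalIdeal (nonZeroDivisors R) K) :
            Submodule R K) := by
          rw [hmul]; rw [coe_one]; exact Submodule.one_le.mp le_rfl
        rwa [coe_mul] at this
      -- extract a finite representation 1 = ∑ a j * b j
      rw [Submodule.mul_eq_span_mul_set, Submodule.mem_span_set'] at hone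
      obtain ⟨nI, f, g, hgsum⟩ := hone
      choose ga hga gb hgb hgab using fun j : Fin nI => Set.mem_mul.mp (g j).2
      set a : Fin nI → K := fun j => f j • ga j with ha
      set b : Fin nI → K := gb with hb
      have haI : ∀ j, a j ∈ I := fun j => Submodule.smul_mem _ _ (hga j)
      have hbJ : ∀ j, b j ∈ (J⁻¹ : FractionalIdeal (nonZeroDivisors R) K) := hgb
      have hsum1 : ∑ j, a j * b j = 1 := by
        rw [← hgsum]
        apply Finset.sum_congr rfl
        intro j _
        simp only [ha, ← hgab j, smul_mul_assoc, smul_eq_mul]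
      have hbmul : ∀ (j : Fin nI), ∀ y ∈ I, b j * y ∈ Rg := by
        intro j y hy
        have := (FractionalIdeal.mem_inv_iff hJne).mp (hbJ j) y hy
        exact FractionalIdeal.mem_one_iff _ |>.mp this
      -- lift the a j to elements of L
      choose l hl hevl using fun j : Fin nI => Submodule.mem_map.mp (haI j)
      -- the sublattice of elements vanishing at i₀
      set L' : Submodule R (ι → K) := L ⊓ LinearMap.ker ev with hL'
      have hL'le : L' ≤ L := inf_le_left
      have hL'fg : L'.FG := by
        haveI : IsNoetherian R L := isNoetherian_of_fg_of_noetherian L hfg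
        have : L' = Submodule.map L.subtype (Submodule.comap L.subtype (LinearMap.ker ev)) := by
          rw [Submodule.map_comap_subtype]
        rw [this]
        exact (IsNoetherian.noetherian _).map _
      have hL'supp : ∀ u ∈ L', ∀ i, i ∉ S' → u i = 0 := by
        intro u hu i hiS
        by_cases hii : i = i₀
        · subst hii
          have := hu.2
          simpa [ev] using this
        · exact hsupp u hu.1 i (by simp [hii, hiS])
      obtain ⟨n', x', χ', hx'L, hχ'int, hrec'⟩ := IH L' hL'fg hL'supp
      -- define the correction functional coefficients
      set ck : Fin n' → K := fun k => ∑ j, b j * pairPi (l j) (χ' k) with hck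
      set dI : K → (ι → K) := fun c => (fun i => if i = i₀ then c else 0) with hdI
      have hpair_dI : ∀ (u : ι → K) (c : K), pairPi u (dI c) = u i₀ * c := by
        intro u c; rw [hdI]; exact pairPi_delta u i₀ c
      have hevu : ∀ u : ι → K, ev u = u i₀ := fun _ => rfl
      have hmemI : ∀ u ∈ L, u i₀ ∈ I := by
        intro u hu
        exact ⟨u, hu, rfl⟩
      have hcoefrng : ∀ u ∈ L, ∀ j : Fin nI, u i₀ * b j ∈ Rg := by
        intro u hu j
        rw [mul_comm]
        exact hbmul j _ (hmemI u hu)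
      -- the projection of u to L'
      set u' : (ι → K) → (ι → K) := fun u => u - ∑ j, (u i₀ * b j) • l j with hu'def
      have hu'L : ∀ u ∈ L, u' u ∈ L := by
        intro u hu
        apply Submodule.sub_mem _ hu
        apply Submodule.sum_mem
        intro j _
        obtain ⟨r, hr⟩ := hcoefrng u hu j
        rw [← hr, algebraMap_smul]
        exact Submodule.smul_mem _ _ (hl j)
      have hli₀ : ∀ j, l j i₀ = a j := fun j => hevl j
      have hu'i₀ : ∀ u ∈ L, u' u i₀ = 0 := by
        intro u hu
        have : u' u i₀ = u i₀ - ∑ j, (u i₀ * b j) * l j i₀ := by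
          simp [hu'def, Finset.sum_apply]
        rw [this]
        have : ∑ j, (u i₀ * b j) * l j i₀ = u i₀ * ∑ j, a j * b j := by
          rw [Finset.mul_sum]
          apply Finset.sum_congr rfl
          intro j _
          rw [hli₀ j]; ring
        rw [this, hsum1, mul_one, sub_self]
      have hu'L' : ∀ u ∈ L, u' u ∈ L' := by
        intro u hu
        exact ⟨hu'L u hu, by simpa [LinearMap.mem_ker, hevu] using hu'i₀ u hu⟩
      have hpairχ : ∀ u ∈ L, ∀ k : Fin n',
          pairPi u (χ' k - ck k • dI 1) = pairPi (u' u) (χ' k) := by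
        intro u hu k
        have h1 : pairPi u (χ' k - ck k • dI 1) = pairPi u (χ' k) - ck k * u i₀ := by
          rw [pairPi_sub_right, pairPi_smul_right, hpair_dI, mul_one]
        have h2 : pairPi (u' u) (χ' k)
            = pairPi u (χ' k) - ∑ j, (u i₀ * b j) * pairPi (l j) (χ' k) := by
          rw [hu'def]
          simp only [pairPi_sub_left, pairPi_sum_left, pairPi_smul_left]
        rw [h1, h2]
        congr 1
        simp only [hck]
        rw [Finset.sum_mul]
        apply Finset.sum_congr rfl
        intro j _
        ring
      refine ⟨nI + n', Fin.append l x',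
        Fin.append (fun j => dI (b j)) (fun k => χ' k - ck k • dI 1), ?_, ?_, ?_⟩
      · intro j
        refine Fin.addCases (fun p => ?_) (fun p => ?_) j
        · rw [Fin.append_left]; exact hl p
        · rw [Fin.append_right]; exact hL'le (hx'L p)
      · intro j u hu
        refine Fin.addCases (fun p => ?_) (fun p => ?_) j
        · rw [Fin.append_left, hpair_dI]
          exact hcoefrng u hu p
        · rw [Fin.append_right, hpairχ u hu]
          exact hχ'int p _ (hu'L' u hu)
      · intro u hu
        rw [Fin.sum_univ_add]
        simp only [Fin.append_left, Fin.append_right]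
        have h1 : ∑ p : Fin nI, pairPi u (dI (b p)) • l p = u - u' u := by
          rw [hu'def]
          simp only [hpair_dI, sub_sub_cancel]
        have h2 : ∑ k : Fin n', pairPi u (χ' k - ck k • dI 1) • x' k = u' u := by
          rw [Finset.sum_congr rfl fun k _ => by rw [hpairχ u hu]]
          exact (hrec' _ (hu'L' u hu)).symm
        rw [h1, h2, sub_add_cancel]


theorem dual_basis (L : Submodule R (ι → K)) (hfg : L.FG) :
    ∃ (n : ℕ) (x χ : Fin n → (ι → K)),
      (∀ j, x j ∈ L) ∧ (∀ j, ∀ u ∈ L, pairPi u (χ j) ∈ Rg) ∧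
      (∀ u ∈ L, u = ∑ j, pairPi u (χ j) • x j) :=
  dual_basis_aux Finset.univ L hfg (by simp)

end DualBasis


section Main

variable {R : Type} [CommRing R] [IsDomain R] [IsDedekindDomain R]
variable {K : Type} [Field K] [Algebra R K] [IsFractionRing R K]
variable {G : Type} [Group G] [Fintype G] [DecidableEq G]
variable {Λ : Subalgebra R (MonoidAlgebra K G)}

local notation "aR" => algebraMap R K
local notation "Rg" => Set.range (algebraMap R K)

/-- the pairing between `K[G]` and `Map(G,K)` -/
def pair (u : MonoidAlgebra K G) (c : G → K) : K := ∑ g, u.coeff g * c g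

lemma mem_dualOrder_iff {c : G → K} :
    c ∈ dualOrder R K G Λ ↔ ∀ u ∈ Λ, pair u c ∈ Rg := Iff.rfl

lemma aR_inj : Function.Injective (aR) := IsFractionRing.injective R K

lemma sum_single_apply (c : G → K) (x : G) :
    (∑ g, MonoidAlgebra.single g (c g)).coeff x = c x := by
  classical
  rw [MonoidAlgebra.coeff_sum, Finset.sum_apply']
  simp [Finsupp.single_apply]

lemma mul_apply_univ (f g : MonoidAlgebra K G) (x : G) :
    (f * g).coeff x = ∑ a, f.coeff a * g.coeff (a⁻¹ * x) := by
  classical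
  induction f using MonoidAlgebra.induction_linear with
  | zero => simp
  | add u v hu hv =>
    rw [add_mul]
    rw [MonoidAlgebra.coeff_add, Finsupp.add_apply, hu, hv, ← Finset.sum_add_distrib]
    apply Finset.sum_congr rfl
    intro a _
    rw [MonoidAlgebra.coeff_add, Finsupp.add_apply, add_mul]
  | single a k =>
    rw [MonoidAlgebra.coeff_single_mul_apply]
    simp [MonoidAlgebra.coeff_single, Finsupp.single_apply, ite_mul]

lemma antipode_apply (u : MonoidAlgebra K G) (x : G) :
    (antipodeMap K G u).coeff x = u.coeff x⁻¹ := by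
  have : x = (x⁻¹)⁻¹ := (inv_inv x).symm
  rw [this, antipodeMap, MonoidAlgebra.mapDomain, MonoidAlgebra.coeff_ofCoeff, Finsupp.mapDomain_apply inv_injective, inv_inv]

lemma antipode_single (g : G) (k : K) :
    antipodeMap K G (MonoidAlgebra.single g k) = MonoidAlgebra.single g⁻¹ k :=
  MonoidAlgebra.mapDomain_single

lemma antipode_one : antipodeMap K G (1 : MonoidAlgebra K G) = 1 := by
  rw [MonoidAlgebra.one_def, antipode_single, inv_one]

theorem exists_denom (hΛ : IsHopfOrder R K G Λ) :
    ∃ d : R, d ≠ 0 ∧ ∀ u ∈ Λ, ∀ g : G, aR d * u.coeff g ∈ Rg := by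
  classical
  obtain ⟨s, hs⟩ := hΛ.fg
  obtain ⟨b, hb⟩ := IsLocalization.exist_integer_multiples_of_finite
    (nonZeroDivisors R) (fun p : (↥s × G) => ((p.1 : MonoidAlgebra K G).coeff p.2 : K))
  refine ⟨(b : R), nonZeroDivisors.coe_ne_zero b, ?_⟩
  intro u hu
  have hu' : u ∈ Submodule.span R (s : Set (MonoidAlgebra K G)) := by
    rw [hs]; exact hu
  refine Submodule.span_induction ?_ ?_ ?_ ?_ hu'
  · intro y hy g
    have := hb ⟨⟨y, hy⟩, g⟩
    obtain ⟨r, hr⟩ := this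
    exact ⟨r, by simpa [Algebra.smul_def] using hr⟩
  · intro g; simpa using rg_zero
  · intro y z _ _ hy hz g
    have : (y + z).coeff g = y.coeff g + z.coeff g := rfl
    rw [this, mul_add]
    exact rg_add (hy g) (hz g)
  · intro r y _ hy g
    have : (r • y).coeff g = aR r * y.coeff g := by
      rw [MonoidAlgebra.coeff_smul_apply, Algebra.smul_def]
    rw [this, mul_left_comm]
    exact rg_mul ⟨r, rfl⟩ (hy g)

section MasterM
variable {M : Type} [AddCommGroup M] [Module R M] [Module Λ M] [IsScalarTower R Λ M]

theorem master (hΛ : IsHopfOrder R K G Λ) (L : M → K)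
    (hadd : ∀ a b : M, L (a + b) = L a + L b)
    (hsmul : ∀ (r : R) (a : M), L (r • a) = aR r * L a)
    (v : Λ) (n : M) :
    L (v • n) = ∑ g, (v : MonoidAlgebra K G).coeff g * L (gAct R K G Λ hΛ g • n) := by
  classical
  obtain ⟨d, hd, hdint⟩ := exists_denom hΛ
  have haRd : (aR d) ≠ 0 := fun h => hd (aR_inj (h.trans (map_zero _).symm))
  have hL0 : L 0 = 0 := by
    have := hsmul 0 0
    simpa using this
  have hLsum : ∀ (s : Finset G) (F : G → M),
      L (∑ i ∈ s, F i) = ∑ i ∈ s, L (F i) := by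
    intro s F
    induction s using Finset.induction_on with
    | empty => simpa using hL0
    | insert _ _ hni ih => rw [Finset.sum_insert hni, Finset.sum_insert hni, hadd, ih]
  choose r hr using fun g => hdint (v : MonoidAlgebra K G) v.2 g
  have key : d • v = ∑ g, r g • gAct R K G Λ hΛ g := by
    apply Subtype.ext
    rw [AddSubmonoidClass.coe_finset_sum]
    have hc : ((d • v : Λ) : MonoidAlgebra K G) = d • (v : MonoidAlgebra K G) := rfl
    rw [hc]
    apply MonoidAlgebra.ext
    apply Finsupp.ext
    intro a
    have lhs : (d • (v : MonoidAlgebra K G)).coeff a = aR d * (v : MonoidAlgebra K G).coeff a := by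
      rw [MonoidAlgebra.coeff_smul_apply, Algebra.smul_def]
    rw [lhs, ← hr a, MonoidAlgebra.coeff_sum, Finset.sum_apply']
    have : ∀ g, ((r g • gAct R K G Λ hΛ g : Λ) : MonoidAlgebra K G).coeff a
        = if g = a then aR (r g) else 0 := by
      intro g
      have hc2 : ((r g • gAct R K G Λ hΛ g : Λ) : MonoidAlgebra K G)
          = r g • (MonoidAlgebra.single g 1 : MonoidAlgebra K G) := rfl
      rw [hc2, MonoidAlgebra.coeff_smul_apply, MonoidAlgebra.coeff_single, Finsupp.single_apply, Algebra.smul_def]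
      by_cases hga : g = a <;> simp [hga]
    rw [Finset.sum_congr rfl fun g _ => this g]
    rw [Finset.sum_ite_eq' Finset.univ a (fun g => aR (r g))]
    simp
  apply mul_left_cancel₀ haRd
  calc aR d * L (v • n) = L (d • (v • n)) := (hsmul d _).symm
    _ = L ((d • v) • n) := by rw [smul_assoc]
    _ = L ((∑ g, r g • gAct R K G Λ hΛ g) • n) := by rw [key]
    _ = ∑ g, L ((r g • gAct R K G Λ hΛ g) • n) := by rw [Finset.sum_smul]; exact hLsum _ _
    _ = ∑ g, aR d * ((v : MonoidAlgebra K G).coeff g * L (gAct R K G Λ hΛ g • n)) := by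
        apply Finset.sum_congr rfl
        intro g _
        rw [smul_assoc, hsmul, hr g, mul_assoc]
    _ = aR d * ∑ g, (v : MonoidAlgebra K G).coeff g * L (gAct R K G Λ hΛ g • n) := by
        rw [Finset.mul_sum]

end MasterM

lemma incl1_add (p q : MonoidAlgebra K G) :
    incl1 K G (p + q) = incl1 K G p + incl1 K G q := MonoidAlgebra.mapDomain_add _ _ _

lemma incl2_add (p q : MonoidAlgebra K G) :
    incl2 K G (p + q) = incl2 K G p + incl2 K G q := MonoidAlgebra.mapDomain_add _ _ _

lemma incl1_zero : incl1 K G 0 = 0 := MonoidAlgebra.mapDomain_zero _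

lemma incl2_zero : incl2 K G 0 = 0 := MonoidAlgebra.mapDomain_zero _

lemma incl1_single (g : G) (k : K) :
    incl1 K G (MonoidAlgebra.single g k) = MonoidAlgebra.single (g, (1:G)) k :=
  MonoidAlgebra.mapDomain_single

lemma incl2_single (g : G) (k : K) :
    incl2 K G (MonoidAlgebra.single g k) = MonoidAlgebra.single ((1:G), g) k :=
  MonoidAlgebra.mapDomain_single

/-- pointwise product of an element of `K[G]` with a function -/
def pprod (u : MonoidAlgebra K G) (c : G → K) : MonoidAlgebra K G :=
  ∑ g, MonoidAlgebra.single g (u.coeff g * c g)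

lemma pprod_apply (u : MonoidAlgebra K G) (c : G → K) (x : G) :
    (pprod u c).coeff x = u.coeff x * c x := by
  rw [pprod, sum_single_apply (fun g => u.coeff g * c g) x]

theorem pprod_mem (hΛ : IsHopfOrder R K G Λ) {u : MonoidAlgebra K G} (hu : u ∈ Λ)
    {c : G → K} (hc : c ∈ dualOrder R K G Λ) : pprod u c ∈ Λ := by
  classical
  set L : ((G × G) →₀ K) →ₗ[R] MonoidAlgebra K G :=
    Finsupp.lsum R (fun p : G × G =>
      ((LinearMap.toSpanSingleton K (MonoidAlgebra K G)
        (MonoidAlgebra.single p.1 (c p.2))).restrictScalars R)) with hL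
  set ψ : MonoidAlgebra K (G × G) →ₗ[R] MonoidAlgebra K G :=
    L ∘ₗ (MonoidAlgebra.coeffLinearEquiv R).toLinearMap with hψ
  have hLsingle : ∀ (p : G × G) (k : K),
      L (Finsupp.single p k) = MonoidAlgebra.single p.1 (k * c p.2) := by
    intro p k
    rw [hL]
    erw [Finsupp.lsum_single]
    rw [LinearMap.restrictScalars_apply, LinearMap.toSpanSingleton_apply,
      MonoidAlgebra.smul_single, smul_eq_mul]
  have hψsingle : ∀ (p : G × G) (k : K),
      ψ (MonoidAlgebra.single p k) = MonoidAlgebra.single p.1 (k * c p.2) :=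
    fun p k => hLsingle p k
  have hdiag : ψ (diagMap K G u) = pprod u c := by
    show L (Finsupp.mapDomain (fun g : G => (g, g)) u.coeff) = pprod u c
    rw [Finsupp.mapDomain]
    rw [map_finsuppSum]
    rw [Finsupp.sum_fintype _ _ (by intro g; simp)]
    rw [pprod]
    apply Finset.sum_congr rfl
    intro g _
    rw [hLsingle]
  have hgen : ∀ x ∈ {x : MonoidAlgebra K (G × G) |
      ∃ a ∈ Λ, ∃ b ∈ Λ, x = incl1 K G a * incl2 K G b}, ψ x ∈ Λ.toSubmodule := by
    rintro x ⟨a, ha, b, hb, rfl⟩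
    have hkey : ∀ (a' b' : MonoidAlgebra K G),
        ψ (incl1 K G a' * incl2 K G b') = (∑ y, b'.coeff y * c y) • a' := by
      intro a' b'
      induction a' using MonoidAlgebra.induction_linear with
      | zero => simp [incl1_zero]
      | add p q hp hq =>
        rw [incl1_add, add_mul, map_add, hp, hq, smul_add]
      | single g k =>
        rw [incl1_single]
        induction b' using MonoidAlgebra.induction_linear with
        | zero => simp [incl2_zero]
        | add p q hp hq =>
          rw [incl2_add, mul_add, map_add, hp, hq]
          rw [← add_smul]
          congr 1
          rw [← Finset.sum_add_distrib]
          apply Finset.sum_congr rfl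
          intro y _
          rw [MonoidAlgebra.coeff_add, Finsupp.add_apply, add_mul]
        | single h l =>
          rw [incl2_single]
          erw [MonoidAlgebra.single_mul_single]
          have : ((g, (1:G)) * ((1:G), h)) = (g, h) := by simp
          rw [this, hψsingle]
          have hsum : (∑ y, (MonoidAlgebra.single h l : MonoidAlgebra K G).coeff y * c y)
              = l * c h := by
            rw [Finset.sum_congr rfl (fun y _ => by
              rw [MonoidAlgebra.coeff_single, Finsupp.single_apply])]
            simp [ite_mul]
          rw [hsum, MonoidAlgebra.smul_single, smul_eq_mul, mul_comm (l * c h) k, mul_assoc]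
    rw [hkey a b]
    have hbc : (∑ y, b.coeff y * c y) ∈ Rg := hc b hb
    obtain ⟨r, hrr⟩ := hbc
    rw [← hrr, algebraMap_smul]
    exact Submodule.smul_mem _ _ ha
  have hspan := hΛ.comul_mem u hu
  have : ψ (diagMap K G u) ∈ Λ.toSubmodule := by
    refine Submodule.span_induction ?_ ?_ ?_ ?_ hspan
    · intro x hx; exact hgen x hx
    · simpa using (Λ.toSubmodule.zero_mem)
    · intro x y _ _ hx hy; rw [map_add]; exact Submodule.add_mem _ hx hy
    · intro r x _ hx; rw [map_smul]; exact Submodule.smul_mem _ _ hx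
  rw [hdiag] at this
  exact this


def tG : MonoidAlgebra K G := ∑ g, MonoidAlgebra.single g (1 : K)

lemma tG_mem (hΛ : IsHopfOrder R K G Λ) : tG ∈ Λ :=
  Subalgebra.sum_mem _ fun g _ => hΛ.grp_mem g

lemma tG_apply (x : G) : (tG : MonoidAlgebra K G).coeff x = 1 :=
  sum_single_apply (fun _ => (1:K)) x

/-- Fourier-type map -/
def PhiF (c : G → K) : MonoidAlgebra K G := ∑ g, MonoidAlgebra.single g (c g)

lemma PhiF_apply (c : G → K) (x : G) : (PhiF c).coeff x = c x := sum_single_apply c x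

lemma PhiF_mem (hΛ : IsHopfOrder R K G Λ) {c : G → K} (hc : c ∈ dualOrder R K G Λ) :
    PhiF c ∈ Λ := by
  have : PhiF c = pprod tG c := by
    apply Finset.sum_congr rfl
    intro g _
    rw [tG_apply, one_mul]
  rw [this]
  exact pprod_mem hΛ (tG_mem hΛ) hc

/-- the dual order as an `R`-submodule of `G → K` -/
def Asub (Λ : Subalgebra R (MonoidAlgebra K G)) : Submodule R (G → K) where
  carrier := dualOrder R K G Λ
  add_mem' := by
    intro a b ha hb u hu
    have : (∑ g, u.coeff g * (a + b) g) = (∑ g, u.coeff g * a g) + ∑ g, u.coeff g * b g := by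
      rw [← Finset.sum_add_distrib]
      exact Finset.sum_congr rfl fun g _ => by rw [Pi.add_apply, mul_add]
    rw [this]
    exact rg_add (ha u hu) (hb u hu)
  zero_mem' := by
    intro u hu
    simpa using rg_zero
  smul_mem' := by
    intro r a ha u hu
    have : (∑ g, u.coeff g * (r • a) g) = aR r * ∑ g, u.coeff g * a g := by
      rw [Finset.mul_sum]
      exact Finset.sum_congr rfl fun g _ => by
        rw [Pi.smul_apply, Algebra.smul_def]; ring
    rw [this]
    exact rg_mul ⟨r, rfl⟩ (ha u hu)

lemma mem_Asub {c : G → K} : c ∈ Asub Λ ↔ c ∈ dualOrder R K G Λ := Iff.rfl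

lemma single_one_mem (hΛ : IsHopfOrder R K G Λ) (g : G) :
    (MonoidAlgebra.single g (1:K)) ∈ Λ := hΛ.grp_mem g

lemma pair_single_one (g : G) (c : G → K) :
    pair (MonoidAlgebra.single g (1:K)) c = c g := by
  rw [pair]
  rw [Finset.sum_congr rfl (fun g' _ => by rw [MonoidAlgebra.coeff_single, Finsupp.single_apply, ite_mul, one_mul, zero_mul])]
  simp

theorem Asub_fg (hΛ : IsHopfOrder R K G Λ) : (Asub Λ).FG := by
  classical
  set Lfull : Submodule R (G → K) :=
    Submodule.span R (Set.range fun g : G => (fun g' => if g' = g then (1:K) else 0)) with hLf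
  have hfull : Lfull.FG := Submodule.fg_span (Set.finite_range _)
  have hle : Asub Λ ≤ Lfull := by
    intro c hc
    have hval : ∀ g, ∃ r : R, aR r = c g := by
      intro g
      have := hc (MonoidAlgebra.single g (1:K)) (single_one_mem hΛ g)
      rwa [show (∑ g', (MonoidAlgebra.single g (1:K)).coeff g' * c g') = c g from
        pair_single_one g c] at this
    choose r hr using hval
    have hcc : c = ∑ g, r g • (fun g' => if g' = g then (1:K) else 0) := by
      funext g'
      rw [Finset.sum_apply]
      rw [Finset.sum_congr rfl (fun g _ => by
        rw [Pi.smul_apply, smul_ite, smul_zero, Algebra.smul_def, mul_one])]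
      rw [Finset.sum_ite_eq Finset.univ g' (fun g => aR (r g))]
      simp [hr]
    rw [hcc]
    exact Submodule.sum_mem _ fun g _ =>
      Submodule.smul_mem _ _ (Submodule.subset_span ⟨g, rfl⟩)
  haveI := isNoetherian_of_fg_of_noetherian Lfull hfull
  have heq : Asub Λ = Submodule.map Lfull.subtype (Submodule.comap Lfull.subtype (Asub Λ)) := by
    rw [Submodule.map_comap_subtype, inf_eq_right.mpr hle]
  rw [heq]
  exact (IsNoetherian.noetherian _).map _

/-- the order as a submodule of functions -/
def LamFun (Λ : Subalgebra R (MonoidAlgebra K G)) : Submodule R (G → K) :=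
  Λ.toSubmodule.map (((Finsupp.lcoeFun : (G →₀ K) →ₗ[K] (G → K)).restrictScalars R) ∘ₗ
    (MonoidAlgebra.coeffLinearEquiv R).toLinearMap)

lemma LamFun_fg (hΛ : IsHopfOrder R K G Λ) : (LamFun Λ).FG := hΛ.fg.map _

lemma mem_LamFun {u : MonoidAlgebra K G} (hu : u ∈ Λ) : ⇑u.coeff ∈ LamFun Λ :=
  ⟨u, hu, rfl⟩

/-- reflexivity: an element pairing integrally with the dual order lies in `Λ`. -/
theorem mem_of_pair_dual (hΛ : IsHopfOrder R K G Λ) (x : MonoidAlgebra K G)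
    (hx : ∀ c ∈ dualOrder R K G Λ, pair x c ∈ Rg) : x ∈ Λ := by
  classical
  obtain ⟨n, xs, χs, hxs, hint, hrec⟩ := dual_basis (R := R) (K := K) (LamFun Λ) (LamFun_fg hΛ)
  have hχ : ∀ j, χs j ∈ dualOrder R K G Λ := by
    intro j u hu
    exact hint j (⇑u.coeff) (mem_LamFun hu)
  have hPid : ∀ y ∈ Submodule.span K ((Λ : Set (MonoidAlgebra K G))),
      (∑ j, pairPi (⇑y.coeff) (χs j) • xs j) = ⇑y.coeff := by
    intro y hy
    refine Submodule.span_induction ?_ ?_ ?_ ?_ hy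
    · intro z hz; exact (hrec ⇑z.coeff (mem_LamFun hz)).symm
    · have : ⇑(0 : MonoidAlgebra K G).coeff = (0 : G → K) := rfl
      rw [this]
      simp [pairPi]
    · intro y z _ _ hy hz
      rw [MonoidAlgebra.coeff_add, Finsupp.coe_add]
      rw [Finset.sum_congr rfl fun j (_ : j ∈ Finset.univ) => by
        rw [pairPi_add_left, add_smul]]
      rw [Finset.sum_add_distrib, hy, hz]
    · intro k y _ hy
      rw [MonoidAlgebra.coeff_smul, Finsupp.coe_smul]
      rw [Finset.sum_congr rfl fun j (_ : j ∈ Finset.univ) => by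
        rw [pairPi_smul_left, mul_smul]]
      rw [← Finset.smul_sum, hy]
  have hxspan : x ∈ Submodule.span K ((Λ : Set (MonoidAlgebra K G))) := by
    rw [hΛ.spans]; trivial
  have hxeq : (∑ j, pairPi (⇑x.coeff) (χs j) • xs j) = ⇑x.coeff := hPid x hxspan
  choose r hrr using fun j => hx (χs j) (hχ j)
  have hmem : ⇑x.coeff ∈ LamFun Λ := by
    rw [← hxeq]
    apply Submodule.sum_mem
    intro j _
    have : pairPi (⇑x.coeff) (χs j) = aR (r j) := (hrr j).symm
    rw [this, algebraMap_smul]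
    exact Submodule.smul_mem _ _ (hxs j)
  obtain ⟨u, hu, hux⟩ := hmem
  have : u = x := by
    apply MonoidAlgebra.ext
    apply Finsupp.ext
    intro g
    exact congrFun hux g
  rwa [← this]

/-- a dual basis for the dual order, with dual functionals realized inside `Λ` -/
theorem A_dual_basis (hΛ : IsHopfOrder R K G Λ) :
    ∃ (n : ℕ) (as : Fin n → (G → K)) (ψs : Fin n → MonoidAlgebra K G),
      (∀ j, as j ∈ dualOrder R K G Λ) ∧ (∀ j, ψs j ∈ Λ) ∧
      (∀ (y x : G), (∑ j, (ψs j).coeff y * as j x) = if x = y then (1:K) else 0) := by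
  classical
  obtain ⟨n, as, χs, hasA, hint, hrec⟩ := dual_basis (R := R) (K := K) (Asub Λ) (Asub_fg hΛ)
  obtain ⟨d, hd, hdint⟩ := exists_denom hΛ
  have haRd : (aR d) ≠ 0 := fun h => hd (aR_inj (h.trans (map_zero _).symm))
  set ψs : Fin n → MonoidAlgebra K G := fun j => MonoidAlgebra.ofCoeff (Finsupp.equivFunOnFinite.symm (χs j)) with hψs
  have hψcoe : ∀ j, ⇑(ψs j).coeff = χs j := by
    intro j
    rw [hψs]
    ext g
    rw [MonoidAlgebra.coeff_ofCoeff, Finsupp.coe_equivFunOnFinite_symm]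
  have hψΛ : ∀ j, ψs j ∈ Λ := by
    intro j
    apply mem_of_pair_dual hΛ
    intro c hc
    have h1 : pair (ψs j) c = pairPi c (χs j) := by
      rw [pair, pairPi]
      exact Finset.sum_congr rfl fun g _ => by rw [hψcoe j, mul_comm]
    rw [h1]
    exact hint j c hc
  refine ⟨n, as, ψs, fun j => hasA j, hψΛ, ?_⟩
  intro y x
  set dδ : G → K := fun g => if g = y then aR d else 0 with hdδ
  have hdδA : dδ ∈ Asub Λ := by
    intro u hu
    have : (∑ g, u.coeff g * dδ g) = aR d * u.coeff y := by
      rw [hdδ]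
      simp [mul_ite, mul_comm]
    rw [this]
    exact hdint u hu y
  have h1 : ∀ j, pairPi dδ (χs j) = aR d * χs j y := by
    intro j
    rw [pairPi, hdδ]
    simp [ite_mul]
  have h2 := hrec dδ hdδA
  have h3 := congrFun h2 x
  rw [Finset.sum_apply] at h3
  have h4 : ∀ j, (pairPi dδ (χs j) • as j) x = aR d * (χs j y * as j x) := by
    intro j
    rw [Pi.smul_apply, h1 j, smul_eq_mul, mul_assoc]
  rw [Finset.sum_congr rfl (fun j _ => h4 j), ← Finset.mul_sum] at h3
  have h5 : dδ x = aR d * (if x = y then (1:K) else 0) := by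
    rw [hdδ]
    by_cases hxy : x = y <;> simp [hxy]
  rw [h5] at h3
  have := mul_left_cancel₀ haRd h3.symm
  rw [← this]
  exact Finset.sum_congr rfl fun j _ => by rw [hψcoe j]


section LamSec
variable (hΛ : IsHopfOrder R K G Λ) (lam : R)
variable (hlam : epsIntegrals R K G Λ =
    {y : K | ∃ r : R, y = algebraMap R K r * algebraMap R K lam})
include hΛ hlam

theorem lam_ne_zero : lam ≠ 0 := by
  classical
  obtain ⟨d, hd, hdint⟩ := exists_denom hΛ
  set xd : G → K := fun g => if g = 1 then aR d else 0 with hxd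
  have hxdA : xd ∈ dualOrder R K G Λ := by
    intro u hu
    have h1 : (∑ g, u.coeff g * xd g) = u.coeff 1 * aR d := by
      rw [hxd]
      simp [mul_ite]
    rw [h1, mul_comm]
    exact hdint u hu 1
  have hxdint : xd ∈ integrals R K G Λ := by
    refine ⟨hxdA, ?_⟩
    intro a _ h
    by_cases h1 : h = 1
    · subst h1; rfl
    · have : xd h = 0 := if_neg h1
      rw [this, mul_zero, mul_zero]
  have hmem : aR d ∈ epsIntegrals R K G Λ := ⟨xd, hxdint, (if_pos rfl).symm⟩
  rw [hlam] at hmem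
  obtain ⟨r, hrd⟩ := hmem
  intro h0
  apply hd
  refine aR_inj (K := K) ?_
  rw [map_zero, hrd, h0, map_zero, mul_zero]

theorem lam_ell : ∀ u ∈ Λ, aR lam * u.coeff 1 ∈ Rg := by
  classical
  obtain ⟨d, hd, hdint⟩ := exists_denom hΛ
  have haRd : (aR d) ≠ 0 := fun h => hd (aR_inj (h.trans (map_zero _).symm))
  have hlamin : aR lam ∈ epsIntegrals R K G Λ := by
    rw [hlam]; exact ⟨1, by rw [map_one, one_mul]⟩
  obtain ⟨x, hxint, hx1⟩ := hlamin
  have hsupp : ∀ h : G, h ≠ 1 → x h = 0 := by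
    intro h hne
    set a : G → K := fun g => if g = h then aR d else 0 with ha
    have haA : a ∈ dualOrder R K G Λ := by
      intro u hu
      have h1 : (∑ g, u.coeff g * a g) = u.coeff h * aR d := by
        rw [ha]; simp [mul_ite]
      rw [h1, mul_comm]
      exact hdint u hu h
    have hint := hxint.2 a haA h
    have ha1 : a 1 = 0 := if_neg (fun e => hne e.symm)
    have hah : a h = aR d := if_pos rfl
    rw [ha1, zero_mul, hah] at hint
    rcases mul_eq_zero.mp hint with h' | h'
    · exact absurd h' haRd
    · exact h'
  intro u hu
  have hps : pair u x = u.coeff 1 * x 1 := by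
    rw [pair]
    rw [Finset.sum_eq_single 1 (fun g _ hg => by rw [hsupp g hg, mul_zero])
      (fun habs => absurd (Finset.mem_univ 1) habs)]
  have hmem := hxint.1 u hu
  have : (∑ g, u.coeff g * x g) = aR lam * u.coeff 1 := by
    rw [show (∑ g, u.coeff g * x g) = pair u x from rfl, hps, ← hx1, mul_comm]
  rwa [this] at hmem

theorem sigma_lam {c : G → K} (hc : c ∈ dualOrder R K G Λ) :
    ∃ r : R, (∑ g, c g) = aR r * aR lam := by
  classical
  obtain ⟨n, as, ψs, hasA, hψΛ, hker⟩ := A_dual_basis hΛ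
  set σc : K := ∑ g, c g with hσc
  set xσ : G → K := fun g => if g = 1 then σc else 0 with hxσ
  have hxσA : xσ ∈ dualOrder R K G Λ := by
    intro u hu
    have h1 : (∑ g, u.coeff g * xσ g) = u.coeff 1 * σc := by
      rw [hxσ]; simp [mul_ite]
    rw [h1]
    set e : Fin n → (G → K) := fun j y => ∑ x, u.coeff x * as j (x * y) with he
    have heA : ∀ j, e j ∈ dualOrder R K G Λ := by
      intro j w hw
      have h2 : (∑ y, w.coeff y * e j y) = ∑ z, (u * w).coeff z * as j z := by
        rw [he]
        calc ∑ y, w.coeff y * ∑ x, u.coeff x * as j (x*y)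
            = ∑ y, ∑ x, u.coeff x * w.coeff y * as j (x*y) := by
              refine Finset.sum_congr rfl fun y _ => ?_
              rw [Finset.mul_sum]
              exact Finset.sum_congr rfl fun x _ => by ring
          _ = ∑ x, ∑ y, u.coeff x * w.coeff y * as j (x*y) := Finset.sum_comm
          _ = ∑ x, ∑ z, u.coeff x * w.coeff (x⁻¹ * z) * as j z := by
              refine Finset.sum_congr rfl fun x _ => ?_
              refine Fintype.sum_equiv (Equiv.mulLeft x) _ _ fun y => ?_
              simp [Equiv.mulLeft]
          _ = ∑ z, ∑ x, u.coeff x * w.coeff (x⁻¹ * z) * as j z := Finset.sum_comm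
          _ = ∑ z, (∑ x, u.coeff x * w.coeff (x⁻¹ * z)) * as j z := by
              refine Finset.sum_congr rfl fun z _ => ?_
              rw [Finset.sum_mul]
          _ = ∑ z, (u * w).coeff z * as j z := by
              refine Finset.sum_congr rfl fun z _ => ?_
              rw [mul_apply_univ]
      rw [h2]
      exact hasA j (u * w) (mul_mem hu hw)
    have hu1 : ∀ y : G, (∑ x, u.coeff x * (if x * y = y then (1:K) else 0)) = u.coeff 1 := by
      intro y
      have : ∀ x : G, (if x * y = y then (1:K) else 0) = (if x = 1 then (1:K) else 0) := by
        intro x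
        by_cases hx : x = 1
        · subst hx; simp
        · rw [if_neg hx, if_neg (fun e => hx (by
            have := mul_eq_right.mp e
            exact this))]
      rw [Finset.sum_congr rfl fun x _ => by rw [this x]]
      simp [mul_ite]
    have hmain : u.coeff 1 * σc = ∑ j, ∑ y, (pprod (ψs j) c).coeff y * e j y := by
      calc u.coeff 1 * σc = ∑ y, c y * u.coeff 1 := by
            rw [hσc, Finset.mul_sum]
            exact Finset.sum_congr rfl fun y _ => mul_comm _ _
        _ = ∑ y, c y * (∑ x, u.coeff x * (if x * y = y then (1:K) else 0)) := by
            exact Finset.sum_congr rfl fun y _ => by rw [hu1 y]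
        _ = ∑ y, c y * (∑ x, u.coeff x * (∑ j, (ψs j).coeff y * as j (x * y))) := by
            refine Finset.sum_congr rfl fun y _ => ?_
            congr 1
            refine Finset.sum_congr rfl fun x _ => ?_
            rw [hker y (x * y)]
        _ = ∑ y, ∑ x, ∑ j, ((ψs j).coeff y * c y) * (u.coeff x * as j (x * y)) := by
            refine Finset.sum_congr rfl fun y _ => ?_
            rw [Finset.mul_sum]
            refine Finset.sum_congr rfl fun x _ => ?_
            rw [Finset.mul_sum, Finset.mul_sum]
            exact Finset.sum_congr rfl fun j _ => by ring
        _ = ∑ y, ∑ j, ∑ x, ((ψs j).coeff y * c y) * (u.coeff x * as j (x * y)) := by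
            exact Finset.sum_congr rfl fun y _ => Finset.sum_comm
        _ = ∑ j, ∑ y, ∑ x, ((ψs j).coeff y * c y) * (u.coeff x * as j (x * y)) := Finset.sum_comm
        _ = ∑ j, ∑ y, (pprod (ψs j) c).coeff y * e j y := by
            refine Finset.sum_congr rfl fun j _ => Finset.sum_congr rfl fun y _ => ?_
            rw [pprod_apply, he, Finset.mul_sum]
    rw [hmain]
    refine rg_sum _ _ fun j _ => ?_
    exact heA j (pprod (ψs j) c) (pprod_mem hΛ (hψΛ j) hc)
  have hint : xσ ∈ integrals R K G Λ := by
    refine ⟨hxσA, ?_⟩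
    intro a _ h
    by_cases h1 : h = 1
    · subst h1; rfl
    · have : xσ h = 0 := if_neg h1
      rw [this, mul_zero, mul_zero]
  have hmem : σc ∈ epsIntegrals R K G Λ := ⟨xσ, hint, (if_pos rfl).symm⟩
  rw [hlam] at hmem
  exact hmem

theorem phiF_lam_mem {c : G → K} (hc : c ∈ dualOrder R K G Λ) :
    (∑ g, MonoidAlgebra.single g ((aR lam)⁻¹ * c g)) ∈ Λ := by
  classical
  have hlne : aR lam ≠ 0 := fun h =>
    (lam_ne_zero hΛ lam hlam) (aR_inj (h.trans (map_zero _).symm))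
  apply mem_of_pair_dual hΛ
  intro a ha
  set ca : G → K := fun g => c g * a g with hca
  have hcaA : ca ∈ dualOrder R K G Λ := by
    intro u hu
    have h1 : (∑ g, u.coeff g * ca g) = ∑ g, (pprod u c).coeff g * a g := by
      refine Finset.sum_congr rfl fun g _ => ?_
      rw [pprod_apply, hca]; ring
    rw [h1]
    exact ha (pprod u c) (pprod_mem hΛ hu hc)
  obtain ⟨r, hrs⟩ := sigma_lam hΛ lam hlam hcaA
  have h2 : pair (∑ g, MonoidAlgebra.single g ((aR lam)⁻¹ * c g)) a
      = (aR lam)⁻¹ * ∑ g, ca g := by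
    rw [pair, Finset.mul_sum]
    refine Finset.sum_congr rfl fun g _ => ?_
    rw [sum_single_apply (fun g => (aR lam)⁻¹ * c g) g, hca]; ring
  rw [h2, hrs]
  refine ⟨r, ?_⟩
  rw [mul_comm (aR r), ← mul_assoc, inv_mul_cancel₀ hlne, one_mul]

end LamSec


section FormsSec
variable {M : Type} [AddCommGroup M] [Module R M] [Module Λ M] [IsScalarTower R Λ M]
variable (hΛ : IsHopfOrder R K G Λ)

lemma gAct_coe (g : G) :
    ((gAct R K G Λ hΛ g : Λ) : MonoidAlgebra K G) = MonoidAlgebra.single g 1 := rfl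

lemma gAct_mul (g g' : G) :
    gAct R K G Λ hΛ g * gAct R K G Λ hΛ g' = gAct R K G Λ hΛ (g * g') := by
  apply Subtype.ext
  show (MonoidAlgebra.of K G g) * (MonoidAlgebra.of K G g') = MonoidAlgebra.of K G (g * g')
  rw [← map_mul]

lemma gAct_one : gAct R K G Λ hΛ (1 : G) = 1 := by
  apply Subtype.ext
  show MonoidAlgebra.of K G (1 : G) = 1
  rw [map_one]

lemma g_cancel (g : G) (m : M) :
    gAct R K G Λ hΛ g • (gAct R K G Λ hΛ g⁻¹ • m) = m := by
  rw [← mul_smul, gAct_mul, mul_inv_cancel, gAct_one, one_smul]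

lemma g_cancel' (g : G) (m : M) :
    gAct R K G Λ hΛ g⁻¹ • (gAct R K G Λ hΛ g • m) = m := by
  rw [← mul_smul, gAct_mul, inv_mul_cancel, gAct_one, one_smul]

lemma rsmul_eq (r : R) (m : M) :
    r • m = ((algebraMap R Λ r) : Λ) • m := (algebraMap_smul Λ r m).symm

lemma alg_coe (r : R) :
    ((algebraMap R Λ r : Λ) : MonoidAlgebra K G) = MonoidAlgebra.single 1 (aR r) := by
  rw [Subalgebra.coe_algebraMap]
  rw [show (algebraMap R (MonoidAlgebra K G)) r = MonoidAlgebra.single 1 (aR r) from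
    congrFun MonoidAlgebra.coe_algebraMap r]

section Herm
variable {h : M → M → MonoidAlgebra K G} (hh : IsHermitianGForm R K G Λ M hΛ h)
include hh

lemma herm_gr (m n : M) (g : G) :
    h m (gAct R K G Λ hΛ g • n) = h m n * MonoidAlgebra.single g⁻¹ 1 := by
  have := hh.smul_pair 1 (gAct R K G Λ hΛ g) m n
  rw [one_smul, OneMemClass.coe_one, one_mul] at this
  rw [this, gAct_coe, antipode_single]

lemma herm_gl (m n : M) (g : G) :
    h (gAct R K G Λ hΛ g • m) n = MonoidAlgebra.single g 1 * h m n := by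
  have := hh.smul_pair (gAct R K G Λ hΛ g) 1 m n
  rw [one_smul, OneMemClass.coe_one, antipode_one, mul_one] at this
  rw [this, gAct_coe]

lemma herm_rl (r : R) (m n : M) :
    h (r • m) n = MonoidAlgebra.single 1 (aR r) * h m n := by
  rw [rsmul_eq (Λ := Λ) r m]
  have := hh.smul_pair (algebraMap R Λ r) 1 m n
  rw [one_smul, OneMemClass.coe_one, antipode_one, mul_one] at this
  rw [this, alg_coe]

lemma herm_rr (r : R) (m n : M) :
    h m (r • n) = h m n * MonoidAlgebra.single 1 (aR r) := by
  rw [rsmul_eq (Λ := Λ) r n]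
  have := hh.smul_pair 1 (algebraMap R Λ r) m n
  rw [one_smul, OneMemClass.coe_one, one_mul] at this
  rw [this, alg_coe, antipode_single, inv_one]

lemma herm_coeff (m n : M) (g : G) :
    (h m (gAct R K G Λ hΛ g • n)).coeff 1 = (h m n).coeff g := by
  rw [herm_gr hΛ hh]
  rw [MonoidAlgebra.mul_single_apply]
  simp

lemma herm_coeff_l (m n : M) (g : G) :
    (h (gAct R K G Λ hΛ g⁻¹ • m) n).coeff 1 = (h m n).coeff g := by
  rw [herm_gl hΛ hh]
  rw [MonoidAlgebra.single_mul_apply]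
  simp

end Herm

theorem qOf_isGForm (lam : R)
    (hlam : epsIntegrals R K G Λ =
      {y : K | ∃ r : R, y = algebraMap R K r * algebraMap R K lam})
    {h : M → M → MonoidAlgebra K G} (hh : IsHermitianGForm R K G Λ M hΛ h) :
    IsGForm R K G Λ M hΛ (qOf R K G M lam h) := by
  constructor
  · intro m₁ m₂ n
    rw [qOf, qOf, qOf, hh.add_left, MonoidAlgebra.coeff_add, Finsupp.add_apply, mul_add]
  · intro m n₁ n₂
    rw [qOf, qOf, qOf, hh.add_right, MonoidAlgebra.coeff_add, Finsupp.add_apply, mul_add]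
  · intro r m n
    rw [qOf, qOf, herm_rl hΛ hh, MonoidAlgebra.single_one_mul_apply]
    ring
  · intro r m n
    rw [qOf, qOf, herm_rr hΛ hh, MonoidAlgebra.mul_single_one_apply]
    ring
  · intro m n
    rw [qOf, qOf, hh.conj_symm m n, antipode_apply, inv_one]
  · intro g m n
    rw [qOf, qOf]
    congr 1
    have hexp := hh.smul_pair (gAct R K G Λ hΛ g) (gAct R K G Λ hΛ g) m n
    rw [gAct_coe, antipode_single] at hexp
    rw [hexp]
    rw [MonoidAlgebra.mul_single_apply, MonoidAlgebra.single_mul_apply]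
    simp
  · intro m n
    exact lam_ell hΛ lam hlam (h m n) (hh.vals m n)

end FormsSec


section QSec
variable {M : Type} [AddCommGroup M] [Module R M] [Module Λ M] [IsScalarTower R Λ M]
variable (hΛ : IsHopfOrder R K G Λ)
variable {q : M → M → K} (hq : IsGForm R K G Λ M hΛ q)

lemma hOf_apply (lam : R) (q : M → M → K) (m n : M) (x : G) :
    (hOf R K G Λ M hΛ lam q m n).coeff x = (aR lam)⁻¹ * q m (gAct R K G Λ hΛ x • n) :=
  sum_single_apply (fun g => (aR lam)⁻¹ * q m (gAct R K G Λ hΛ g • n)) x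

include hq

lemma qmaster_right (m : M) (v : Λ) (n : M) :
    q m (v • n) = ∑ g, (v : MonoidAlgebra K G).coeff g * q m (gAct R K G Λ hΛ g • n) :=
  master hΛ (fun n' => q m n') (hq.add_right m) (fun r a => hq.smul_right r m a) v n

lemma qmaster_left (m : M) (v : Λ) (n : M) :
    q (v • m) n = ∑ g, (v : MonoidAlgebra K G).coeff g * q (gAct R K G Λ hΛ g • m) n :=
  master hΛ (fun m' => q m' n) (fun a b => hq.add_left a b n)
    (fun r a => hq.smul_left r a n) v m

lemma qginv (m n : M) (g : G) :
    q m (gAct R K G Λ hΛ g • n) = q (gAct R K G Λ hΛ g⁻¹ • m) n := by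
  have := hq.g_invariant g (gAct R K G Λ hΛ g⁻¹ • m) n
  rw [g_cancel] at this
  exact this

theorem hOf_isHermitian (lam : R)
    (hlam : epsIntegrals R K G Λ =
      {y : K | ∃ r : R, y = algebraMap R K r * algebraMap R K lam}) :
    IsHermitianGForm R K G Λ M hΛ (hOf R K G Λ M hΛ lam q) := by
  constructor
  · intro m₁ m₂ n
    apply MonoidAlgebra.ext; apply Finsupp.ext; intro x
    rw [MonoidAlgebra.coeff_add, Finsupp.add_apply, hOf_apply, hOf_apply, hOf_apply, hq.add_left, mul_add]
  · intro m n₁ n₂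
    apply MonoidAlgebra.ext; apply Finsupp.ext; intro x
    rw [MonoidAlgebra.coeff_add, Finsupp.add_apply, hOf_apply, hOf_apply, hOf_apply, smul_add, hq.add_right, mul_add]
  · -- smul_pair
    intro ν μ m n
    apply MonoidAlgebra.ext; apply Finsupp.ext; intro g
    have hw : gAct R K G Λ hΛ g • (μ • n) = ((gAct R K G Λ hΛ g) * μ) • n :=
      (mul_smul _ _ _).symm
    have lhs1 : (hOf R K G Λ M hΛ lam q (ν • m) (μ • n)).coeff g
        = (aR lam)⁻¹ * q (ν • m) (((gAct R K G Λ hΛ g) * μ) • n) := by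
      rw [hOf_apply, hw]
    have lhs2 := qmaster_left hΛ hq (v := ν) (m := m) (n := ((gAct R K G Λ hΛ g) * μ) • n)
    have lhs3 : ∀ x : G, q (gAct R K G Λ hΛ x • m) (((gAct R K G Λ hΛ g) * μ) • n)
        = ∑ y, ((MonoidAlgebra.single g 1 * (μ : MonoidAlgebra K G) : MonoidAlgebra K G)).coeff y
            * q m (gAct R K G Λ hΛ (x⁻¹ * y) • n) := by
      intro x
      have hmr := qmaster_right hΛ hq (gAct R K G Λ hΛ x • m) ((gAct R K G Λ hΛ g) * μ) n
      have hco : ((gAct R K G Λ hΛ g * μ : Λ) : MonoidAlgebra K G)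
          = MonoidAlgebra.single g 1 * (μ : MonoidAlgebra K G) := by
        rw [MulMemClass.coe_mul, gAct_coe]
      rw [hco] at hmr
      rw [hmr]
      refine Finset.sum_congr rfl fun y _ => ?_
      have h1 : gAct R K G Λ hΛ y • n
          = gAct R K G Λ hΛ x • (gAct R K G Λ hΛ (x⁻¹ * y) • n) := by
        rw [← mul_smul, gAct_mul, mul_inv_cancel_left]
      rw [h1, hq.g_invariant]
    have rhs1 : (((ν : MonoidAlgebra K G) * hOf R K G Λ M hΛ lam q m n)
          * antipodeMap K G (μ : MonoidAlgebra K G)).coeff g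
        = ∑ x, (ν : MonoidAlgebra K G).coeff x * ∑ c, ((aR lam)⁻¹ * q m (gAct R K G Λ hΛ c • n))
            * (μ : MonoidAlgebra K G).coeff ((c⁻¹ * (x⁻¹ * g))⁻¹) := by
      rw [mul_assoc, mul_apply_univ]
      refine Finset.sum_congr rfl fun x _ => ?_
      congr 1
      rw [mul_apply_univ]
      refine Finset.sum_congr rfl fun c _ => ?_
      rw [antipode_apply, hOf_apply]
    rw [lhs1, lhs2, Finset.mul_sum, rhs1]
    refine Finset.sum_congr rfl fun x _ => ?_
    rw [lhs3 x, Finset.mul_sum, Finset.mul_sum, Finset.mul_sum]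
    refine (Fintype.sum_equiv (Equiv.mulLeft x) _ _ fun c => ?_).symm
    have e1 : ((MonoidAlgebra.single g 1 * (μ : MonoidAlgebra K G) : MonoidAlgebra K G)).coeff ((Equiv.mulLeft x) c)
        = (μ : MonoidAlgebra K G).coeff (g⁻¹ * (x * c)) := by
      rw [MonoidAlgebra.single_mul_apply, one_mul]
      rfl
    have e2 : (x⁻¹ * ((Equiv.mulLeft x) c)) = c := by
      simp [Equiv.mulLeft]
    have e3 : ((c⁻¹ * (x⁻¹ * g))⁻¹) = g⁻¹ * (x * c) := by
      simp [mul_assoc]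
    rw [e1, e2, e3]
    ring
  · -- conj_symm
    intro m n
    apply MonoidAlgebra.ext; apply Finsupp.ext; intro g
    rw [antipode_apply, hOf_apply, hOf_apply]
    congr 1
    rw [qginv hΛ hq m n g, hq.symm]
  · -- vals
    intro m n
    have hcA : (fun g => q m (gAct R K G Λ hΛ g • n)) ∈ dualOrder R K G Λ := by
      intro u hu
      have hmr := qmaster_right hΛ hq m ⟨u, hu⟩ n
      rw [show ((⟨u, hu⟩ : Λ) : MonoidAlgebra K G) = u from rfl] at hmr
      rw [← hmr]
      exact hq.vals m _
    exact phiF_lam_mem hΛ lam hlam hcA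

theorem qOf_hOf (lam : R)
    (hlam : epsIntegrals R K G Λ =
      {y : K | ∃ r : R, y = algebraMap R K r * algebraMap R K lam}) :
    qOf R K G M lam (hOf R K G Λ M hΛ lam q) = q := by
  have hlne : aR lam ≠ 0 := fun h0 =>
    (lam_ne_zero hΛ lam hlam) (aR_inj (h0.trans (map_zero _).symm))
  funext m n
  rw [qOf, hOf_apply]
  rw [show gAct R K G Λ hΛ (1 : G) • n = n from by rw [gAct_one, one_smul]]
  rw [← mul_assoc, mul_inv_cancel₀ hlne, one_mul]

end QSec

theorem hOf_qOf {M : Type} [AddCommGroup M] [Module R M] [Module Λ M] [IsScalarTower R Λ M]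
    (hΛ : IsHopfOrder R K G Λ) (lam : R)
    (hlam : epsIntegrals R K G Λ =
      {y : K | ∃ r : R, y = algebraMap R K r * algebraMap R K lam})
    {h : M → M → MonoidAlgebra K G} (hh : IsHermitianGForm R K G Λ M hΛ h) :
    hOf R K G Λ M hΛ lam (qOf R K G M lam h) = h := by
  have hlne : aR lam ≠ 0 := fun h0 =>
    (lam_ne_zero hΛ lam hlam) (aR_inj (h0.trans (map_zero _).symm))
  funext m n
  apply MonoidAlgebra.ext; apply Finsupp.ext; intro g
  rw [hOf_apply, qOf, ← mul_assoc, inv_mul_cancel₀ hlne, one_mul, herm_coeff hΛ hh]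


theorem linearize {M : Type} [AddCommGroup M] [Module R M] (φK : M → K)
    (hadd : ∀ a b, φK (a + b) = φK a + φK b)
    (hsm : ∀ (r : R) (a : M), φK (r • a) = aR r * φK a)
    (hval : ∀ m, φK m ∈ Rg) :
    ∃ φ₁ : M →ₗ[R] R, ∀ m, aR (φ₁ m) = φK m := by
  choose f hf using hval
  refine ⟨⟨⟨f, ?_⟩, ?_⟩, hf⟩
  · intro a b
    apply aR_inj (K := K)
    rw [map_add, hf, hf, hf, hadd]
  · intro r a
    apply aR_inj (K := K)
    simp only [RingHom.id_apply, smul_eq_mul]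
    rw [map_mul, hf, hf, hsm]

section NondegSec
variable {M : Type} [AddCommGroup M] [Module R M] [Module Λ M] [IsScalarTower R Λ M]
variable (hΛ : IsHopfOrder R K G Λ) (lam : R)
variable (hlam : epsIntegrals R K G Λ =
    {y : K | ∃ r : R, y = algebraMap R K r * algebraMap R K lam})
variable {h : M → M → MonoidAlgebra K G} (hh : IsHermitianGForm R K G Λ M hΛ h)
include hlam hh

theorem nondeg_iff :
    HNondeg R K G Λ M h ↔ QNondeg R K M (qOf R K G M lam h) := by
  classical
  have hlne : aR lam ≠ 0 := fun h0 =>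
    (lam_ne_zero hΛ lam hlam) (aR_inj (h0.trans (map_zero _).symm))
  have bridge2 : ∀ (m n : M) (g : G),
      qOf R K G M lam h (gAct R K G Λ hΛ g⁻¹ • m) n = aR lam * (h m n).coeff g := by
    intro m n g; rw [qOf, herm_coeff_l hΛ hh]
  have hq1 : ∀ m n : M, qOf R K G M lam h m n = aR lam * (h m n).coeff 1 := fun m n => rfl
  constructor
  · -- HNondeg → QNondeg
    intro hN φ
    set φhat : M → MonoidAlgebra K G := fun m =>
      ∑ g, MonoidAlgebra.single g ((aR lam)⁻¹ * aR (φ (gAct R K G Λ hΛ g⁻¹ • m))) with hφhat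
    have φhat_apply : ∀ (m : M) (x : G),
        (φhat m).coeff x = (aR lam)⁻¹ * aR (φ (gAct R K G Λ hΛ x⁻¹ • m)) := by
      intro m x
      rw [hφhat]
      exact sum_single_apply (fun g => (aR lam)⁻¹ * aR (φ (gAct R K G Λ hΛ g⁻¹ • m))) x
    have hLadd : ∀ a b : M, aR (φ (a + b)) = aR (φ a) + aR (φ b) := by
      intro a b; rw [map_add, map_add]
    have hLsm : ∀ (r : R) (a : M), aR (φ (r • a)) = aR r * aR (φ a) := by
      intro r a; rw [LinearMap.map_smul, smul_eq_mul, map_mul]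
    have hadd : ∀ m₁ m₂, φhat (m₁ + m₂) = φhat m₁ + φhat m₂ := by
      intro m₁ m₂
      apply MonoidAlgebra.ext; apply Finsupp.ext; intro x
      rw [MonoidAlgebra.coeff_add, Finsupp.add_apply, φhat_apply, φhat_apply, φhat_apply, smul_add, hLadd, mul_add]
    have hsem : ∀ (ν : Λ) (m : M), φhat (ν • m) = (ν : MonoidAlgebra K G) * φhat m := by
      intro ν m
      apply MonoidAlgebra.ext; apply Finsupp.ext; intro g
      have e0 : gAct R K G Λ hΛ g⁻¹ • (ν • m) = ((gAct R K G Λ hΛ g⁻¹) * ν) • m :=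
        (mul_smul _ _ _).symm
      have e1 := master hΛ (fun m' => aR (φ m')) hLadd hLsm ((gAct R K G Λ hΛ g⁻¹) * ν) m
      have hco : ((gAct R K G Λ hΛ g⁻¹ * ν : Λ) : MonoidAlgebra K G)
          = MonoidAlgebra.single g⁻¹ 1 * (ν : MonoidAlgebra K G) := by
        rw [MulMemClass.coe_mul, gAct_coe]
      rw [hco] at e1
      have lhs : (φhat (ν • m)).coeff g
          = (aR lam)⁻¹ * ∑ x, ((MonoidAlgebra.single g⁻¹ 1 * (ν : MonoidAlgebra K G)
              : MonoidAlgebra K G)).coeff x * aR (φ (gAct R K G Λ hΛ x • m)) := by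
        rw [φhat_apply, e0, e1]
      have rhs : ((ν : MonoidAlgebra K G) * φhat m).coeff g
          = ∑ x, (ν : MonoidAlgebra K G).coeff x
              * ((aR lam)⁻¹ * aR (φ (gAct R K G Λ hΛ (g⁻¹ * x) • m))) := by
        rw [mul_apply_univ]
        refine Finset.sum_congr rfl fun x _ => ?_
        rw [φhat_apply]
        congr 3
        rw [mul_inv_rev, inv_inv]
      rw [lhs, rhs, Finset.mul_sum]
      refine Fintype.sum_equiv (Equiv.mulLeft g) _ _ fun x => ?_
      simp only [Equiv.coe_mulLeft]
      rw [MonoidAlgebra.single_mul_apply, one_mul, inv_inv, inv_mul_cancel_left]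
      ring
    have hvals : ∀ m, φhat m ∈ Λ := by
      intro m
      have hcA : (fun g => aR (φ (gAct R K G Λ hΛ g⁻¹ • m))) ∈ dualOrder R K G Λ := by
        intro u hu
        have e1 := master hΛ (fun m' => aR (φ m')) hLadd hLsm
          ⟨antipodeMap K G u, hΛ.antipode_mem u hu⟩ m
        rw [show ((⟨antipodeMap K G u, hΛ.antipode_mem u hu⟩ : Λ) : MonoidAlgebra K G)
          = antipodeMap K G u from rfl] at e1
        have e2 : (∑ g, u.coeff g * aR (φ (gAct R K G Λ hΛ g⁻¹ • m)))
            = ∑ g, (antipodeMap K G u).coeff g * aR (φ (gAct R K G Λ hΛ g • m)) := by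
          refine Fintype.sum_equiv (Equiv.inv G) _ _ fun g => ?_
          rw [antipode_apply]
          simp
        rw [e2, ← e1]
        exact ⟨φ _, rfl⟩
      exact phiF_lam_mem hΛ lam hlam hcA
    obtain ⟨n₀, hP, huniq⟩ := hN φhat hadd hsem hvals
    have toQ : ∀ n : M, (∀ m, h m n = φhat m) →
        (∀ m, qOf R K G M lam h m n = aR (φ m)) := by
      intro n hPn m
      rw [hq1, hPn m, φhat_apply]
      rw [show gAct R K G Λ hΛ (1:G)⁻¹ • m = m from by rw [inv_one, gAct_one, one_smul]]
      rw [← mul_assoc, mul_inv_cancel₀ hlne, one_mul]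
    have toP : ∀ n : M, (∀ m, qOf R K G M lam h m n = aR (φ m)) →
        (∀ m, h m n = φhat m) := by
      intro n hQn m
      apply MonoidAlgebra.ext; apply Finsupp.ext; intro g
      apply mul_left_cancel₀ hlne
      rw [← bridge2 m n g, hQn (gAct R K G Λ hΛ g⁻¹ • m), φhat_apply,
        ← mul_assoc, mul_inv_cancel₀ hlne, one_mul]
    exact ⟨n₀, toQ n₀ hP, fun n' hn' => huniq n' (toP n' hn')⟩
  · -- QNondeg → HNondeg
    intro hQ φ hadd hsem hvals
    set φK : M → K := fun m => aR lam * (φ m).coeff 1 with hφK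
    have hKadd : ∀ a b, φK (a + b) = φK a + φK b := by
      intro a b
      rw [hφK]
      dsimp only
      rw [hadd, MonoidAlgebra.coeff_add, Finsupp.add_apply, mul_add]
    have hKsm : ∀ (r : R) (a : M), φK (r • a) = aR r * φK a := by
      intro r a
      have e1 : φ (r • a) = MonoidAlgebra.single 1 (aR r) * φ a := by
        rw [rsmul_eq (Λ := Λ) r a, hsem, alg_coe]
      rw [hφK]
      dsimp only
      rw [e1, MonoidAlgebra.single_one_mul_apply]
      ring
    have hKval : ∀ m, φK m ∈ Rg := fun m => lam_ell hΛ lam hlam (φ m) (hvals m)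
    obtain ⟨φ₁, hφ₁⟩ := linearize φK hKadd hKsm hKval
    obtain ⟨n₀, hQn, hQuniq⟩ := hQ φ₁
    have toP : ∀ n : M, (∀ m, qOf R K G M lam h m n = aR (φ₁ m)) →
        ∀ m, h m n = φ m := by
      intro n hn m
      apply MonoidAlgebra.ext; apply Finsupp.ext; intro g
      apply mul_left_cancel₀ hlne
      have lhs : aR lam * (h m n).coeff g = aR (φ₁ (gAct R K G Λ hΛ g⁻¹ • m)) := by
        rw [← bridge2 m n g, hn]
      have rhs : aR (φ₁ (gAct R K G Λ hΛ g⁻¹ • m)) = aR lam * (φ m).coeff g := by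
        rw [hφ₁, hφK]
        dsimp only
        rw [hsem (gAct R K G Λ hΛ g⁻¹) m, gAct_coe, MonoidAlgebra.single_mul_apply]
        simp
      rw [lhs, rhs]
    have toQ : ∀ n : M, (∀ m, h m n = φ m) →
        ∀ m, qOf R K G M lam h m n = aR (φ₁ m) := by
      intro n hn m
      rw [hq1, hn m, hφ₁ m]
    exact ⟨n₀, toP n₀ hQn, fun n' hn' => hQuniq n' (toQ n' hn')⟩

end NondegSec

end Main

end S3P

/-- Let `Λ` be a Hopf `R`-order in `K[G]` with dual order `A`, with
`ε_A(I(A)) = λR` principal, and let `M` be a finitely generated locally free left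
`Λ`-module.  Then: (a) if `h` is a hermitian `G`-form then `q_h` is a `G`-form;
(b) if `q` is a `G`-form then `h_q` is a hermitian `G`-form; (c) `h ↦ q_h` and `q ↦ h_q`
are mutually inverse; (d) `h` is non-degenerate iff `q_h` is non-degenerate. -/
theorem statement3
    (R : Type) [CommRing R] [IsDomain R] [IsDedekindDomain R]
    (K : Type) [Field K] [Algebra R K] [IsFractionRing R K]
    (G : Type) [Group G] [Fintype G] [DecidableEq G]
    (Λ : Subalgebra R (MonoidAlgebra K G)) (hΛ : IsHopfOrder R K G Λ)
    (lam : R)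
    (hlam : epsIntegrals R K G Λ =
      {y : K | ∃ r : R, y = algebraMap R K r * algebraMap R K lam})
    (M : Type) [AddCommGroup M] [Module R M] [Module Λ M] [IsScalarTower R Λ M]
    [Module.Finite Λ M]
    (hloc : ∀ 𝔭 : Ideal R, 𝔭.IsPrime → LocallyFreeAt R K G Λ M 𝔭) :
    (∀ h : M → M → MonoidAlgebra K G, IsHermitianGForm R K G Λ M hΛ h →
      IsGForm R K G Λ M hΛ (qOf R K G M lam h)) ∧
    (∀ q : M → M → K, IsGForm R K G Λ M hΛ q →
      IsHermitianGForm R K G Λ M hΛ (hOf R K G Λ M hΛ lam q)) ∧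
    (∀ q : M → M → K, IsGForm R K G Λ M hΛ q →
      qOf R K G M lam (hOf R K G Λ M hΛ lam q) = q) ∧
    (∀ h : M → M → MonoidAlgebra K G, IsHermitianGForm R K G Λ M hΛ h →
      hOf R K G Λ M hΛ lam (qOf R K G M lam h) = h) ∧
    (∀ h : M → M → MonoidAlgebra K G, IsHermitianGForm R K G Λ M hΛ h →
      (HNondeg R K G Λ M h ↔ QNondeg R K M (qOf R K G M lam h))) := by
  refine ⟨?_, ?_, ?_, ?_, ?_⟩
  · intro h hh
    exact S3P.qOf_isGForm hΛ lam hlam hh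
  · intro q hq
    exact S3P.hOf_isHermitian hΛ hq lam hlam
  · intro q hq
    exact S3P.qOf_hOf hΛ hq lam hlam
  · intro h hh
    exact S3P.hOf_qOf hΛ lam hlam hh
  · intro h hh
    exact S3P.nondeg_iff hΛ lam hlam hh
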